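/- Let u : [0,T] → ℝ be the piecewise linear function defined by u(t) = u₁ + βt on [0,T₁], u(t) = u(T₁) - f_fw(t-T₁) on [T₁, T₁+T₂], u(t) = u(T₁+T₂) + β(t-T₁-T₂) on [T₁+T₂, T/2], and u(t+T/2) = u(t) for t ∈ [0, T/2], where T₁+T₂+T₃ = T/2, T₂ = (T/2)(1-ρ)/(1+ρ) and β(T₁+T₃) = f_fw T₂, with α = (f_bw+f_fw)/2, β = (f_bw - f_fw)/2, ρ = β/α. Then (1/T)∫_0^T u(t) dt = u₁ + β T₁ - T f_fw β/(4α). -/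

import Mathlib

open MeasureTheory intervalIntegral

lemma lin_int (a b c m : ℝ) :
    ∫ t in a..b, (c + m * t) = c * (b - a) + m * ((b ^ 2 - a ^ 2) / 2) := by
  rw [intervalIntegral.integral_add intervalIntegrable_const
    (intervalIntegrable_id.const_mul m), intervalIntegral.integral_const,
    intervalIntegral.integral_const_mul, integral_id]
  simp [mul_comm]

theorem average_velocity (T T₁ T₂ T₃ f_bw f_fw u₁ : ℝ) (u : ℝ → ℝ)
    (hffw : 0 < f_fw) (hfb : f_fw ≤ f_bw) (hT : 0 < T)
    (hT₁ : 0 ≤ T₁) (hT₂ : 0 ≤ T₂) (hT₃ : 0 ≤ T₃)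
    (α β ρ : ℝ) (hα : α = (f_bw + f_fw) / 2) (hβ : β = (f_bw - f_fw) / 2)
    (hρ : ρ = β / α)
    (hsum : T₁ + T₂ + T₃ = T / 2)
    (hT₂eq : T₂ = (T / 2) * (1 - ρ) / (1 + ρ))
    (hbal : β * (T₁ + T₃) = f_fw * T₂)
    (hu1 : ∀ t ∈ Set.Icc 0 T₁, u t = u₁ + β * t)
    (hu2 : ∀ t ∈ Set.Icc T₁ (T₁ + T₂), u t = u T₁ - f_fw * (t - T₁))
    (hu3 : ∀ t ∈ Set.Icc (T₁ + T₂) (T / 2),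
      u t = u (T₁ + T₂) + β * (t - (T₁ + T₂)))
    (hper : ∀ t ∈ Set.Icc 0 (T / 2), u (t + T / 2) = u t) :
    (1 / T) * ∫ t in (0 : ℝ)..T, u t = u₁ + β * T₁ - T * f_fw * β / (4 * α) := by
  have hαf : α = β + f_fw := by rw [hα, hβ]; ring
  have hβ0 : 0 ≤ β := by rw [hβ]; linarith
  have hαpos : 0 < α := by rw [hαf]; linarith
  have h12 : T₁ ≤ T₁ + T₂ := by linarith
  have h23 : T₁ + T₂ ≤ T / 2 := by linarith
  have huT₁ : u T₁ = u₁ + β * T₁ := hu1 T₁ ⟨hT₁, le_refl _⟩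
  have huT₁₂ : u (T₁ + T₂) = u₁ + β * T₁ - f_fw * T₂ := by
    rw [hu2 (T₁ + T₂) ⟨h12, le_refl _⟩, huT₁]; ring
  -- equalities of u with linear functions on the three intervals
  have e1 : Set.EqOn u (fun t => u₁ + β * t) (Set.uIcc 0 T₁) := by
    rw [Set.uIcc_of_le hT₁]; exact fun t ht => hu1 t ht
  have e2 : Set.EqOn u (fun t => (u₁ + β * T₁ + f_fw * T₁) + (-f_fw) * t)
      (Set.uIcc T₁ (T₁ + T₂)) := by
    rw [Set.uIcc_of_le h12]
    intro t ht
    rw [hu2 t ht, huT₁]; ring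
  have e3 : Set.EqOn u
      (fun t => (u₁ + β * T₁ - f_fw * T₂ - β * (T₁ + T₂)) + β * t)
      (Set.uIcc (T₁ + T₂) (T / 2)) := by
    rw [Set.uIcc_of_le h23]
    intro t ht
    rw [hu3 t ht, huT₁₂]; ring
  -- integrability from these equalities
  have intOf : ∀ (a b c m : ℝ), Set.EqOn u (fun t => c + m * t) (Set.uIcc a b) →
      IntervalIntegrable u volume a b := by
    intro a b c m h
    refine (((by fun_prop : Continuous fun t : ℝ => c + m * t)).intervalIntegrable
      a b).congr ?_
    intro x hx
    exact (h (Set.uIoc_subset_uIcc hx)).symm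
  have int1 := intOf 0 T₁ u₁ β e1
  have int2 := intOf T₁ (T₁ + T₂) (u₁ + β * T₁ + f_fw * T₁) (-f_fw) e2
  have int3 := intOf (T₁ + T₂) (T / 2) (u₁ + β * T₁ - f_fw * T₂ - β * (T₁ + T₂)) β e3
  -- the three piece integrals
  have i1 : ∫ t in (0 : ℝ)..T₁, u t
      = u₁ * (T₁ - 0) + β * ((T₁ ^ 2 - 0 ^ 2) / 2) := by
    rw [intervalIntegral.integral_congr e1, lin_int]
  have i2 : ∫ t in T₁..(T₁ + T₂), u t
      = (u₁ + β * T₁ + f_fw * T₁) * ((T₁ + T₂) - T₁)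
        + (-f_fw) * (((T₁ + T₂) ^ 2 - T₁ ^ 2) / 2) := by
    rw [intervalIntegral.integral_congr e2, lin_int]
  have i3 : ∫ t in (T₁ + T₂)..(T / 2), u t
      = (u₁ + β * T₁ - f_fw * T₂ - β * (T₁ + T₂)) * (T / 2 - (T₁ + T₂))
        + β * (((T / 2) ^ 2 - (T₁ + T₂) ^ 2) / 2) := by
    rw [intervalIntegral.integral_congr e3, lin_int]
  -- first half
  have half : ∫ t in (0 : ℝ)..(T / 2), u t
      = (∫ t in (0 : ℝ)..T₁, u t) + (∫ t in T₁..(T₁ + T₂), u t)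
        + (∫ t in (T₁ + T₂)..(T / 2), u t) := by
    rw [integral_add_adjacent_intervals int1 int2,
      integral_add_adjacent_intervals (int1.trans int2) int3]
  -- second half equals first half
  have hsecond : ∫ t in (T / 2)..T, u t = ∫ t in (0 : ℝ)..(T / 2), u t := by
    have := intervalIntegral.integral_comp_add_right (a := (0 : ℝ)) (b := T / 2)
      u (T / 2)
    rw [zero_add] at this
    have h2 : (T / 2 + T / 2 : ℝ) = T := by ring
    rw [h2] at this
    rw [← this]
    refine intervalIntegral.integral_congr fun t ht => ?_
    rw [Set.uIcc_of_le (by linarith : (0:ℝ) ≤ T / 2)] at ht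
    exact hper t ht
  have intI : IntervalIntegrable u volume 0 (T / 2) :=
    (int1.trans int2).trans int3
  have intII : IntervalIntegrable u volume (T / 2) T := by
    have h := intI.comp_add_right (-(T / 2))
    rw [show (0 : ℝ) - -(T / 2) = T / 2 by ring,
      show T / 2 - -(T / 2) = T by ring] at h
    refine h.congr ?_
    intro x hx
    rw [Set.uIoc_of_le (by linarith : T / 2 ≤ T)] at hx
    have := hper (x - T / 2) ⟨by linarith [hx.1], by linarith [hx.2]⟩
    rw [show x - T / 2 + T / 2 = x from by ring] at this
    show u (x + -(T / 2)) = u x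
    rw [show x + -(T / 2) = x - T / 2 from by ring, this]
  have hfull : ∫ t in (0 : ℝ)..T, u t = 2 * ∫ t in (0 : ℝ)..(T / 2), u t := by
    rw [← integral_add_adjacent_intervals intI intII, hsecond]; ring
  have hT0 : T ≠ 0 := ne_of_gt hT
  have h2 : α * T₂ = β * (T / 2) := by
    linear_combination T₂ * hαf + β * hsum - hbal
  have hdiv : T * f_fw * β / (4 * α) = f_fw * T₂ / 2 := by
    rw [div_eq_div_iff (by positivity) two_ne_zero]
    linear_combination (-4 * f_fw) * h2
  rw [hfull, half, i1, i2, i3, hdiv, one_div, inv_mul_eq_div, div_eq_iff hT0]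
  linear_combination (T₃ - T₁) * hbal - f_fw * T₂ * hsum
    + (T / 2 - T₁ - T₂ - T₃) * hbal
    + (-(T * β) / 2 + 2 * T₁ * β + T₂ * β + T₂ * f_fw) * hsum
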